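/- Let 0 < t ≤ n/2, d an integer with 0 ≤ d ≤ n, and H = {s_1 < ... < s_t} ⊆ [n] with t the smallest index j such that s_j < 2j. Set H' = H ∪ {2t,...,n} and f_{H,d} = Σ_{k=0}^t (-1)^{t-k} C(d-k, t-k) σ_{H',k} ∈ ℤ[x_1,...,x_n]. Then: (a) deg f_{H,d} = t with leading monomial x_H = Π_{j∈H} x_j (coefficient 1, under any term order with x_n ≺ ... ≺ x_1); (b) f_{H,d}(v_D) = 0 for every D ⊆ [n] with |D| = d. -/

import Mathlib

open MvPolynomial

/-- `u` is the leading monomial of `f` with respect to the term order `m`. -/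
def IsLeadingMonomial {σ F : Type*} [CommSemiring F] (m : MonomialOrder σ)
    (f : MvPolynomial σ F) (u : σ →₀ ℕ) : Prop :=
  u ∈ f.support ∧ ∀ v ∈ f.support, m.toSyn v ≤ m.toSyn u

/-- The polynomial `f_{H,d} = ∑_{k=0}^t (-1)^{t-k} C(d-k, t-k) σ_{H',k} ∈ ℤ[x_1,…,x_n]`,
where `H = {s 0 < … < s (t-1)}` (values in `[n]`), `H' = H ∪ {2t, …, n}`, `σ_{H',k}` is the
`k`-th elementary symmetric polynomial in the variables `x_j`, `j ∈ H'`, and the binomial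
coefficient `C(d-k, t-k)` is extended polynomially to integer arguments (`Ring.choose`).
Variables are indexed by `ℕ`, only `x_1, …, x_n` occurring. -/
noncomputable def fHd (n t d : ℕ) (s : Fin t → ℕ) : MvPolynomial ℕ ℤ :=
  ∑ k ∈ Finset.range (t + 1),
    C ((-1 : ℤ) ^ (t - k) * Ring.choose ((d : ℤ) - (k : ℤ)) (t - k)) *
      ∑ T ∈ (Finset.image s Finset.univ ∪ Finset.Icc (2 * t) n).powersetCard k,
        ∏ j ∈ T, X j

lemma indSum_apply (T : Finset ℕ) (a : ℕ) :
    (∑ j ∈ T, Finsupp.single j 1 : ℕ →₀ ℕ) a = if a ∈ T then 1 else 0 := by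
  rw [Finset.sum_apply']
  simp [Finsupp.single_apply]

lemma indSum_inj {T T' : Finset ℕ}
    (h : (∑ j ∈ T, Finsupp.single j 1 : ℕ →₀ ℕ) = ∑ j ∈ T', Finsupp.single j 1) :
    T = T' := by
  ext a
  have h2 := congrFun (congrArg (fun f : ℕ →₀ ℕ => (f : ℕ → ℕ)) h) a
  simp only [indSum_apply] at h2
  by_cases h1 : a ∈ T <;> by_cases h3 : a ∈ T' <;> simp_all

lemma prod_X_eq (T : Finset ℕ) :
    (∏ j ∈ T, (X j : MvPolynomial ℕ ℤ)) = monomial (∑ j ∈ T, Finsupp.single j 1) 1 := by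
  induction T using Finset.induction_on with
  | empty => simp [monomial_zero']
  | insert _ _ h ih =>
    rw [Finset.prod_insert h, Finset.sum_insert h, ih, X, monomial_mul, one_mul]

lemma key_sum (m t : ℕ) (y : ℤ) :
    ∑ k ∈ Finset.range (t + 1),
      (-1 : ℤ) ^ (t - k) * Ring.choose (y - (k : ℤ)) (t - k) * (m.choose k : ℤ)
    = (-1) ^ t * Ring.choose (y - (m : ℤ)) t := by
  induction m generalizing t y with
  | zero =>
    rw [Finset.sum_eq_single_of_mem 0 (Finset.mem_range.2 (by omega))]
    · simp
    · intro k _ hk0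
      simp [Nat.choose_eq_zero_of_lt (Nat.pos_of_ne_zero hk0)]
  | succ m ih =>
    cases t with
    | zero => simp [Ring.choose_zero_right]
    | succ u =>
      rw [Finset.sum_range_succ']
      have step : ∀ i ∈ Finset.range (u + 1),
          (-1 : ℤ) ^ (u + 1 - (i+1)) * Ring.choose (y - ((i+1 : ℕ) : ℤ)) (u + 1 - (i+1)) *
            ((m+1).choose (i+1) : ℤ)
          = (-1 : ℤ) ^ (u + 1 - (i+1)) * Ring.choose (y - ((i+1 : ℕ) : ℤ)) (u + 1 - (i+1)) *
              (m.choose (i+1) : ℤ)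
            + (-1 : ℤ) ^ (u - i) * Ring.choose ((y-1) - (i : ℕ)) (u - i) * (m.choose i : ℤ) := by
        intro i _
        rw [Nat.choose_succ_succ]
        have h1 : u + 1 - (i + 1) = u - i := by omega
        have h2 : (y - 1) - (i : ℕ) = y - ((i+1 : ℕ) : ℤ) := by push_cast; ring
        rw [h1, h2]
        push_cast
        ring
      rw [Finset.sum_congr rfl step, Finset.sum_add_distrib]
      have e2 := ih u (y - 1)
      have e1 := ih (u + 1) y
      rw [Finset.sum_range_succ'] at e1
      have e0 : ((m+1).choose 0 : ℤ) = (m.choose 0 : ℤ) := by simp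
      have pascal : Ring.choose (y - (m:ℤ)) (u+1)
          = Ring.choose (y - (m:ℤ) - 1) u + Ring.choose (y - (m:ℤ) - 1) (u+1) := by
        have hp := Ring.choose_succ_succ (y - (m:ℤ) - 1) u
        rw [sub_add_cancel] at hp
        exact hp
      have hc : y - ((m+1 : ℕ) : ℤ) = y - (m:ℤ) - 1 := by push_cast; ring
      have hcc : y - 1 - (m:ℤ) = y - (m:ℤ) - 1 := by ring
      rw [e2, hc, hcc]
      rw [e0]
      linear_combination e1 + (-1:ℤ)^(u+1) * pascal

lemma coeff_fHd (n t d : ℕ) (s : Fin t → ℕ) (u : ℕ →₀ ℕ) :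
    (fHd n t d s).coeff u =
      ∑ k ∈ Finset.range (t + 1),
        ((-1 : ℤ) ^ (t - k) * Ring.choose ((d : ℤ) - (k : ℤ)) (t - k)) *
          ∑ T ∈ (Finset.image s Finset.univ ∪ Finset.Icc (2 * t) n).powersetCard k,
            (if (∑ j ∈ T, Finsupp.single j 1) = u then (1 : ℤ) else 0) := by
  unfold fHd
  rw [coeff_sum]
  refine Finset.sum_congr rfl fun k _ => ?_
  rw [coeff_C_mul, coeff_sum]
  congr 1
  refine Finset.sum_congr rfl fun T _ => ?_
  rw [prod_X_eq, coeff_monomial]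

lemma eval_ind_prod (D T : Finset ℕ) :
    (∏ j ∈ T, if j ∈ D then (1 : ℤ) else 0) = if T ⊆ D then 1 else 0 := by
  split_ifs with h
  · exact Finset.prod_eq_one fun j hj => by simp [h hj]
  · obtain ⟨j, hj, hjD⟩ := Finset.not_subset.1 h
    exact Finset.prod_eq_zero hj (by simp [hjD])

lemma eval_ind_sum (D S : Finset ℕ) (k : ℕ) :
    (∑ T ∈ S.powersetCard k, if T ⊆ D then (1 : ℤ) else 0)
      = (((S ∩ D).card).choose k : ℤ) := by
  rw [Finset.sum_boole]
  have : (S.powersetCard k).filter (· ⊆ D) = (S ∩ D).powersetCard k := by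
    ext T
    simp only [Finset.mem_filter, Finset.mem_powersetCard, Finset.subset_inter_iff]
    tauto
  rw [this, Finset.card_powersetCard]

/-- Let `0 < t ≤ n/2`, `0 ≤ d ≤ n`, and `H = {s_1 < … < s_t} ⊆ [n]` with `t` the smallest
index `j` such that `s_j < 2j`. Then:
(a) `deg f_{H,d} = t`, the coefficient of `x_H = ∏_{j ∈ H} x_j` in `f_{H,d}` is `1`, and
`x_H` is the leading monomial of `f_{H,d}` for every term order with `x_n ≺ … ≺ x_1`;
(b) `f_{H,d}` vanishes at the characteristic vector of every `d`-element subset of `[n]`. -/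
theorem stmt19 (n t d : ℕ) (ht : 0 < t) (htn : 2 * t ≤ n) (hd : d ≤ n)
    (s : Fin t → ℕ) (hmono : StrictMono s)
    (hrange : ∀ j, 1 ≤ s j ∧ s j ≤ n)
    (hlast : s ⟨t - 1, by omega⟩ < 2 * t)
    (hmin : ∀ j : Fin t, (j : ℕ) + 1 < t → 2 * ((j : ℕ) + 1) ≤ s j) :
    ((fHd n t d s).totalDegree = t ∧
      (fHd n t d s).coeff (∑ j ∈ Finset.image s Finset.univ, Finsupp.single j 1) = 1 ∧
      (∀ m : MonomialOrder ℕ,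
        (∀ a b : ℕ, 1 ≤ a → a < b → b ≤ n →
          m.toSyn (Finsupp.single b 1) < m.toSyn (Finsupp.single a 1)) →
        IsLeadingMonomial m (fHd n t d s)
          (∑ j ∈ Finset.image s Finset.univ, Finsupp.single j 1))) ∧
      ∀ D : Finset ℕ, D ⊆ Finset.Icc 1 n → D.card = d →
        eval (fun i => if i ∈ D then (1 : ℤ) else 0) (fHd n t d s) = 0 := by
  set H : Finset ℕ := Finset.image s Finset.univ with hH
  set H' : Finset ℕ := H ∪ Finset.Icc (2 * t) n with hH'
  set uH : ℕ →₀ ℕ := ∑ j ∈ H, Finsupp.single j 1 with huH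
  -- basic facts
  have hslt : ∀ j : Fin t, s j < 2 * t := by
    intro j
    have h1 : s j ≤ s ⟨t - 1, by omega⟩ := by
      apply hmono.monotone
      simp only [Fin.le_def]
      omega
    omega
  have hHmem : ∀ x ∈ H', 1 ≤ x ∧ x ≤ n := by
    intro x hx
    rcases Finset.mem_union.1 hx with hx | hx
    · obtain ⟨j, -, rfl⟩ := Finset.mem_image.1 hx
      exact hrange j
    · have := Finset.mem_Icc.1 hx
      omega
  have hH'Icc : H' ⊆ Finset.Icc 1 n := fun x hx => Finset.mem_Icc.2 (hHmem x hx)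
  have hdisj : Disjoint H (Finset.Icc (2 * t) n) := by
    rw [Finset.disjoint_left]
    intro x hx hx2
    obtain ⟨j, -, rfl⟩ := Finset.mem_image.1 hx
    have := Finset.mem_Icc.1 hx2
    have := hslt j
    omega
  have hcardH : H.card = t := by
    rw [hH, Finset.card_image_of_injective _ hmono.injective, Finset.card_univ,
      Fintype.card_fin]
  have hcardH' : H'.card = n - t + 1 := by
    rw [hH', Finset.card_union_of_disjoint hdisj, hcardH, Nat.card_Icc]
    omega
  have hHsubH' : H ⊆ H' := Finset.subset_union_left
  -- the coefficient of x_H is 1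
  have hcoeff1 : (fHd n t d s).coeff uH = 1 := by
    rw [coeff_fHd, ← hH, ← hH']
    have inner : ∀ k ∈ Finset.range (t + 1),
        ((-1 : ℤ) ^ (t - k) * Ring.choose ((d : ℤ) - (k : ℤ)) (t - k)) *
          (∑ T ∈ H'.powersetCard k, if (∑ j ∈ T, Finsupp.single j 1) = uH then (1:ℤ) else 0)
        = if k = t then (-1 : ℤ) ^ (t - k) * Ring.choose ((d : ℤ) - (k : ℤ)) (t - k) else 0 := by
      intro k hk
      by_cases hkt : k = t
      · rw [if_pos hkt]
        subst hkt
        have hco : ∀ T ∈ H'.powersetCard k,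
            (if (∑ j ∈ T, Finsupp.single j 1) = uH then (1:ℤ) else 0)
              = if T = H then 1 else 0 := by
          intro T _
          congr 1
          rw [huH]
          exact propext ⟨fun h => indSum_inj h, fun h => by rw [h]⟩
        rw [Finset.sum_congr rfl hco, Finset.sum_ite_eq' (H'.powersetCard k) H fun _ => (1:ℤ)]
        rw [if_pos (Finset.mem_powersetCard.2 ⟨hHsubH', hcardH⟩), mul_one]
      · rw [if_neg hkt]
        have hz : ∀ T ∈ H'.powersetCard k,
            (if (∑ j ∈ T, Finsupp.single j 1) = uH then (1:ℤ) else 0) = 0 := by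
          intro T hT
          rw [if_neg]
          intro h
          have hTH : T = H := indSum_inj (huH ▸ h)
          have hc := (Finset.mem_powersetCard.1 hT).2
          rw [hTH, hcardH] at hc
          exact hkt hc.symm
        rw [Finset.sum_congr rfl hz]
        simp
    rw [Finset.sum_congr rfl inner, Finset.sum_ite_eq' (Finset.range (t+1)) t]
    rw [if_pos (Finset.mem_range.2 (by omega))]
    simp [Ring.choose_zero_right]
  have huH_supp : uH ∈ (fHd n t d s).support :=
    MvPolynomial.mem_support_iff.2 (by rw [hcoeff1]; exact one_ne_zero)
  -- support description
  have hsupp : ∀ v ∈ (fHd n t d s).support,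
      ∃ T, T ⊆ H' ∧ T.card ≤ t ∧ v = ∑ j ∈ T, Finsupp.single j 1 := by
    intro v hv
    rw [MvPolynomial.mem_support_iff, coeff_fHd, ← hH, ← hH'] at hv
    obtain ⟨k, hk, hne⟩ := Finset.exists_ne_zero_of_sum_ne_zero hv
    have hne2 : (∑ T ∈ H'.powersetCard k,
        if (∑ j ∈ T, Finsupp.single j 1) = v then (1:ℤ) else 0) ≠ 0 := by
      intro h
      rw [h, mul_zero] at hne
      exact hne rfl
    obtain ⟨T, hT, hne3⟩ := Finset.exists_ne_zero_of_sum_ne_zero hne2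
    rw [Finset.mem_powersetCard] at hT
    refine ⟨T, hT.1, ?_, ?_⟩
    · rw [hT.2]
      exact Nat.lt_succ_iff.1 (Finset.mem_range.1 hk)
    · by_contra hne4
      exact hne3 (if_neg fun h => hne4 h.symm)
  -- degree of uH
  have huH_deg : uH.sum (fun _ e => e) = t := by
    rw [huH, ← hcardH]
    rw [← Finsupp.sum_finset_sum_index (by simp) (fun _ _ _ => rfl)]
    simp [Finsupp.sum_single_index]
  -- total degree
  have hdeg : (fHd n t d s).totalDegree = t := by
    apply le_antisymm
    · unfold fHd
      refine (totalDegree_finset_sum _ _).trans (Finset.sup_le fun k hk => ?_)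
      refine (totalDegree_mul _ _).trans ?_
      rw [totalDegree_C, zero_add]
      refine (totalDegree_finset_sum _ _).trans (Finset.sup_le fun T hT => ?_)
      refine (totalDegree_finset_prod _ _).trans ?_
      have hc := (Finset.mem_powersetCard.1 hT).2
      have hk' := Finset.mem_range.1 hk
      calc (∑ j ∈ T, (X j : MvPolynomial ℕ ℤ).totalDegree) = ∑ j ∈ T, 1 := by
            refine Finset.sum_congr rfl fun j _ => ?_
            exact totalDegree_X j
        _ = T.card := by rw [Finset.sum_const, smul_eq_mul, mul_one]
        _ ≤ t := by omega
    · calc t = uH.sum (fun _ e => e) := huH_deg.symm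
        _ ≤ (fHd n t d s).totalDegree := le_totalDegree huH_supp
  refine ⟨⟨hdeg, hcoeff1, ?_⟩, ?_⟩
  · -- leading monomial
    intro mo hmo
    refine ⟨huH_supp, ?_⟩
    intro v hv
    obtain ⟨T, hTsub, hTcard, rfl⟩ := hsupp v hv
    have hsingle_le : ∀ x y : ℕ, x ≤ y → 1 ≤ x → y ≤ n →
        mo.toSyn (Finsupp.single y 1) ≤ mo.toSyn (Finsupp.single x 1) := by
      intro x y hxy hx hy
      rcases eq_or_lt_of_le hxy with rfl | hlt
      · exact le_refl _
      · exact le_of_lt (hmo x y hx hlt hy)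
    have helper : ∀ x ∈ H', ∀ j : Fin t,
        (∀ i : Fin t, (i : ℕ) < (j : ℕ) → s i < x) → s j ≤ x := by
      intro x hx j hltj
      rcases Finset.mem_union.1 hx with hx | hx
      · obtain ⟨l, -, rfl⟩ := Finset.mem_image.1 hx
        by_contra hc
        push_neg at hc
        have hlj : l < j := hmono.lt_iff_lt.1 hc
        exact absurd (hltj l hlj) (lt_irrefl _)
      · have h1 := (Finset.mem_Icc.1 hx).1
        have h2 := hslt j
        omega
    set a : Fin T.card → ℕ := fun i => T.orderEmbOfFin rfl i with ha
    have ha_mem : ∀ i, a i ∈ T := fun i => T.orderEmbOfFin_mem rfl i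
    have ha_key : ∀ p (hp : p < T.card),
        s ⟨p, lt_of_lt_of_le hp hTcard⟩ ≤ a ⟨p, hp⟩ := by
      intro p
      induction p using Nat.strong_induction_on with
      | _ p IH =>
        intro hp
        apply helper _ (hTsub (ha_mem ⟨p, hp⟩))
        intro i hi
        have hip : (i : ℕ) < T.card := lt_trans hi hp
        have h1 := IH i hi hip
        have h2 : a ⟨(i : ℕ), hip⟩ < a ⟨p, hp⟩ :=
          (T.orderEmbOfFin rfl).strictMono (by exact hi)
        have h3 : s i = s ⟨(i : ℕ), i.2⟩ := by congr
        omega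
    have hT_syn : mo.toSyn (∑ j ∈ T, Finsupp.single j 1)
        = ∑ i : Fin T.card, mo.toSyn (Finsupp.single (a i) 1) := by
      rw [map_sum, ← Finset.sum_coe_sort T]
      exact (Fintype.sum_equiv (T.orderIsoOfFin rfl).toEquiv _ _ fun i => rfl).symm
    have hH_syn : mo.toSyn uH = ∑ i : Fin t, mo.toSyn (Finsupp.single (s i) 1) := by
      rw [huH, map_sum, hH, Finset.sum_image (fun x _ y _ h => hmono.injective h)]
    set G : ℕ → mo.syn := fun p =>
      if hp : p < t then mo.toSyn (Finsupp.single (s ⟨p, hp⟩) 1) else 0 with hG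
    have hG0 : ∀ p, (0 : mo.syn) ≤ G p := by
      intro p
      rw [hG]
      dsimp only
      split
      · rw [← mo.bot_eq_zero]
        exact bot_le
      · exact le_refl _
    calc mo.toSyn (∑ j ∈ T, Finsupp.single j 1)
        = ∑ i : Fin T.card, mo.toSyn (Finsupp.single (a i) 1) := hT_syn
      _ ≤ ∑ i : Fin T.card, G (i : ℕ) := by
          refine Finset.sum_le_sum fun i _ => ?_
          have hpt : (i : ℕ) < t := lt_of_lt_of_le i.2 hTcard
          rw [hG]
          dsimp only
          rw [dif_pos hpt]
          refine hsingle_le _ _ ?_ (hrange ⟨i, hpt⟩).1 ((hHmem _ (hTsub (ha_mem i))).2)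
          have := ha_key i.1 i.2
          convert this using 3
      _ = ∑ p ∈ Finset.range T.card, G p := Fin.sum_univ_eq_sum_range G T.card
      _ ≤ ∑ p ∈ Finset.range t, G p :=
          Finset.sum_le_sum_of_subset_of_nonneg (Finset.range_subset_range.2 hTcard)
            fun p _ _ => hG0 p
      _ = ∑ i : Fin t, G (i : ℕ) := (Fin.sum_univ_eq_sum_range G t).symm
      _ = ∑ i : Fin t, mo.toSyn (Finsupp.single (s i) 1) := by
          refine Finset.sum_congr rfl fun i _ => ?_
          rw [hG]
          dsimp only
          rw [dif_pos i.2]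
      _ = mo.toSyn uH := hH_syn.symm
  · -- vanishing
    intro D hD hcard
    unfold fHd
    simp only [map_sum, map_mul, eval_C, map_prod, eval_X]
    rw [← hH, ← hH']
    have hinner : ∀ k ∈ Finset.range (t + 1),
        ((-1 : ℤ) ^ (t - k) * Ring.choose ((d : ℤ) - (k : ℤ)) (t - k)) *
          (∑ T ∈ H'.powersetCard k, ∏ j ∈ T, if j ∈ D then (1:ℤ) else 0)
        = ((-1 : ℤ) ^ (t - k) * Ring.choose ((d : ℤ) - (k : ℤ)) (t - k)) *
            (((H' ∩ D).card).choose k : ℤ) := by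
      intro k _
      rw [Finset.sum_congr rfl fun T _ => eval_ind_prod D T, eval_ind_sum]
    rw [Finset.sum_congr rfl hinner, key_sum ((H' ∩ D).card) t ((d : ℤ))]
    have hmle : (H' ∩ D).card ≤ d := by
      rw [← hcard]
      exact Finset.card_le_card Finset.inter_subset_right
    have hlt : d - (H' ∩ D).card < t := by
      have h1 := Finset.card_sdiff_add_card_inter D H'
      have h2 : D \ H' ⊆ Finset.Icc 1 n \ H' := Finset.sdiff_subset_sdiff hD (le_refl _)
      have h3 : (Finset.Icc 1 n \ H').card = t - 1 := by
        rw [Finset.card_sdiff_of_subset hH'Icc, Nat.card_Icc, hcardH']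
        omega
      have h4 := Finset.card_le_card h2
      have h5 : (D ∩ H').card = (H' ∩ D).card := by rw [Finset.inter_comm]
      omega
    have hcast : (d : ℤ) - ((H' ∩ D).card : ℤ) = ((d - (H' ∩ D).card : ℕ) : ℤ) := by
      omega
    rw [hcast, Ring.choose_natCast, Nat.choose_eq_zero_of_lt hlt]
    simp
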